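/- arXiv:1404.1067 — 7 statements merged into one kernel-verified Lean document; each statement's English description precedes it below -/
import Mathlib

section
/- The symmetrized bidisc G_2 = {(s,p) ∈ ℂ² : |s - conj(s)·p| + |p|² < 1} equals the image of the bidisc 𝔻² under the symmetrization map p(λ₁,λ₂) = (λ₁+λ₂, λ₁λ₂). -/
open Complex Metric Set
open scoped ComplexConjugate

private lemma sym_identity (z w : ℂ) :
    (z + w) - conj (z + w) * (z * w)
      = z * (1 - ((‖w‖ : ℝ)^2 : ℝ)) + w * (1 - ((‖z‖ : ℝ)^2 : ℝ)) := by
  have hz : (z * conj z : ℂ) = (((‖z‖)^2 : ℝ) : ℂ) := by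
    rw [Complex.mul_conj]; norm_cast; rw [Complex.sq_norm]
  have hw : (w * conj w : ℂ) = (((‖w‖)^2 : ℝ) : ℂ) := by
    rw [Complex.mul_conj]; norm_cast; rw [Complex.sq_norm]
  have h : (z + w) - (conj z + conj w) * (z * w)
      = z * (1 - w * conj w) + w * (1 - z * conj z) := by ring
  rw [map_add, h, hz, hw]

private lemma not_root_big (z w : ℂ)
    (h : ‖(z + w) - conj (z + w) * (z * w)‖ + ‖z * w‖ ^ 2 < 1)
    (hz : 1 ≤ ‖z‖) : False := by
  set a := ‖z‖ with ha
  set b := ‖w‖ with hb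
  have hb0 : 0 ≤ b := norm_nonneg w
  have hab : a * b = ‖z * w‖ := (norm_mul z w).symm
  have hablt : a * b < 1 := by nlinarith [norm_nonneg ((z + w) - conj (z + w) * (z * w))]
  have hblt : b < 1 := by nlinarith
  have key := sym_identity z w
  have h1 : ‖z * (1 - ((b^2 : ℝ) : ℂ))‖ = a * (1 - b^2) := by
    rw [norm_mul]
    congr 1
    rw [show (1 : ℂ) - ((b^2 : ℝ) : ℂ) = ((1 - b^2 : ℝ) : ℂ) by push_cast; ring,
      Complex.norm_real, Real.norm_eq_abs, _root_.abs_of_nonneg (by nlinarith)]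
  have h2 : ‖w * (1 - ((a^2 : ℝ) : ℂ))‖ = b * (a^2 - 1) := by
    rw [norm_mul]
    congr 1
    rw [show (1 : ℂ) - ((a^2 : ℝ) : ℂ) = ((1 - a^2 : ℝ) : ℂ) by push_cast; ring,
      Complex.norm_real, Real.norm_eq_abs, _root_.abs_of_nonpos (by nlinarith)]
    ring
  have htri : a * (1 - b^2) - b * (a^2 - 1)
      ≤ ‖(z + w) - conj (z + w) * (z * w)‖ := by
    rw [key]
    have := norm_add_le (z * (1 - ((b^2 : ℝ) : ℂ)) + w * (1 - ((a^2 : ℝ) : ℂ)))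
      (-(w * (1 - ((a^2 : ℝ) : ℂ))))
    simp only [add_neg_cancel_right, norm_neg] at this
    rw [h1, h2] at this
    linarith
  rw [← hab] at h
  nlinarith [mul_nonneg (mul_nonneg (sub_nonneg.mpr hz) (sub_nonneg.mpr hblt.le))
    (sub_nonneg.mpr hablt.le)]

/-- The symmetrized bidisc equals the image of the bidisc under symmetrization. -/
theorem symmetrized_bidisc_eq_image :
    {z : ℂ × ℂ | ‖z.1 - conj z.1 * z.2‖ + ‖z.2‖ ^ 2 < 1} =
      (fun w : ℂ × ℂ => (w.1 + w.2, w.1 * w.2)) '' (ball (0 : ℂ) 1 ×ˢ ball (0 : ℂ) 1) := by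
  ext ⟨s, p⟩
  simp only [mem_setOf_eq, mem_image, mem_prod, mem_ball_zero_iff,
    Prod.exists, Prod.mk.injEq]
  constructor
  · rintro h
    obtain ⟨d, hd⟩ := IsAlgClosed.exists_pow_nat_eq (k := ℂ) (s^2 - 4*p) zero_lt_two
    refine ⟨(s + d)/2, (s - d)/2, ⟨?_, ?_⟩, ?_, ?_⟩
    · -- |λ₁| < 1
      by_contra hc
      refine not_root_big ((s + d)/2) ((s - d)/2) ?_ (le_of_not_gt hc)
      rw [show (s + d)/2 + (s - d)/2 = s by ring,
        show (s + d)/2 * ((s - d)/2) = p by linear_combination (-(1:ℂ)/4) * hd]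
      exact h
    · by_contra hc
      refine not_root_big ((s - d)/2) ((s + d)/2) ?_ (le_of_not_gt hc)
      rw [show (s - d)/2 + (s + d)/2 = s by ring,
        show (s - d)/2 * ((s + d)/2) = p by linear_combination (-(1:ℂ)/4) * hd]
      exact h
    · ring
    · linear_combination (-(1:ℂ)/4) * hd
  · rintro ⟨z, w, ⟨hz, hw⟩, hsum, hprod⟩
    subst hsum hprod
    have hid := sym_identity z w
    set a := ‖z‖ with ha
    set b := ‖w‖ with hb
    have ha0 : 0 ≤ a := norm_nonneg z
    have hb0 : 0 ≤ b := norm_nonneg w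
    have hbound : ‖(z + w) - conj (z + w) * (z * w)‖
        ≤ a * (1 - b^2) + b * (1 - a^2) := by
      rw [hid]
      refine (norm_add_le _ _).trans_eq ?_
      rw [norm_mul, norm_mul,
        show (1 : ℂ) - ((b^2 : ℝ) : ℂ) = ((1 - b^2 : ℝ) : ℂ) by push_cast; ring,
        show (1 : ℂ) - ((a^2 : ℝ) : ℂ) = ((1 - a^2 : ℝ) : ℂ) by push_cast; ring,
        Complex.norm_real, Real.norm_eq_abs, Complex.norm_real, Real.norm_eq_abs,
        _root_.abs_of_nonneg (show (0:ℝ) ≤ 1 - b^2 by nlinarith),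
        _root_.abs_of_nonneg (show (0:ℝ) ≤ 1 - a^2 by nlinarith)]
    have habp : ‖z * w‖ = a * b := norm_mul z w
    rw [habp] at *
    nlinarith [mul_pos (mul_pos (sub_pos.mpr hz) (sub_pos.mpr hw))
      (sub_pos.mpr (show a*b < 1 by nlinarith))]
end

section
/- A point (s,p) ∈ ℂ² lies in the symmetrized bidisc G_2 if and only if both roots of the polynomial z² - s·z + p lie in the open unit disc. -/
open Complex Metric Set
open scoped ComplexConjugate

private lemma sb_key (l1 l2 : ℂ) :
    l1 + l2 - conj (l1 + l2) * (l1 * l2)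
      = l1 * (1 - ((‖l2‖ : ℝ) ^ 2 : ℝ)) + l2 * (1 - ((‖l1‖ : ℝ) ^ 2 : ℝ)) := by
  have h1 : ((‖l1‖ ^ 2 : ℝ) : ℂ) = l1 * conj l1 := by
    rw [Complex.sq_norm]; push_cast [Complex.mul_conj]; ring
  have h2 : ((‖l2‖ ^ 2 : ℝ) : ℂ) = l2 * conj l2 := by
    rw [Complex.sq_norm]; push_cast [Complex.mul_conj]; ring
  rw [map_add]
  push_cast at h1 h2 ⊢
  linear_combination l1 * h2 + l2 * h1

private lemma sb_root_lt (l1 l2 : ℂ)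
    (h : ‖l1 + l2 - conj (l1 + l2) * (l1 * l2)‖ + ‖l1 * l2‖ ^ 2 < 1) :
    ‖l1‖ < 1 := by
  set a := ‖l1‖ with ha
  set b := ‖l2‖ with hb
  have ha0 : 0 ≤ a := norm_nonneg _
  have hb0 : 0 ≤ b := norm_nonneg _
  have habs0 : 0 ≤ ‖l1 + l2 - conj (l1 + l2) * (l1 * l2)‖ := norm_nonneg _
  have hpab : ‖l1 * l2‖ = a * b := norm_mul _ _
  by_contra hc
  push_neg at hc
  have hab : a * b < 1 := by nlinarith [h, hpab]
  have hb1 : b < 1 := by nlinarith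
  have hcast1 : ((1 - b ^ 2 : ℝ) : ℂ) = 1 - ((b : ℝ) ^ 2 : ℝ) := by push_cast; ring
  have hcast2 : ((1 - a ^ 2 : ℝ) : ℂ) = 1 - ((a : ℝ) ^ 2 : ℝ) := by push_cast; ring
  have hX : ‖l1 * (1 - ((b : ℝ) ^ 2 : ℝ) : ℂ)‖ = a * (1 - b ^ 2) := by
    rw [norm_mul, ← hcast1, Complex.norm_real, Real.norm_eq_abs]
    rw [_root_.abs_of_nonneg (show (0:ℝ) ≤ 1 - b ^ 2 by nlinarith)]
  have hY : ‖l2 * (1 - ((a : ℝ) ^ 2 : ℝ) : ℂ)‖ = b * (a ^ 2 - 1) := by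
    rw [norm_mul, ← hcast2, Complex.norm_real, Real.norm_eq_abs]
    rw [_root_.abs_of_nonpos (show 1 - a ^ 2 ≤ (0:ℝ) by nlinarith)]; ring
  have htri : ‖l1 * (1 - ((b : ℝ) ^ 2 : ℝ) : ℂ)‖
      ≤ ‖l1 * (1 - ((b : ℝ) ^ 2 : ℝ) : ℂ) + l2 * (1 - ((a : ℝ) ^ 2 : ℝ) : ℂ)‖
        + ‖l2 * (1 - ((a : ℝ) ^ 2 : ℝ) : ℂ)‖ := by
    calc ‖l1 * (1 - ((b : ℝ) ^ 2 : ℝ) : ℂ)‖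
        = ‖(l1 * (1 - ((b : ℝ) ^ 2 : ℝ) : ℂ) + l2 * (1 - ((a : ℝ) ^ 2 : ℝ) : ℂ))
            + -(l2 * (1 - ((a : ℝ) ^ 2 : ℝ) : ℂ))‖ := by ring_nf
      _ ≤ _ + ‖-(l2 * (1 - ((a : ℝ) ^ 2 : ℝ) : ℂ))‖ := norm_add_le _ _
      _ = _ := by rw [norm_neg]
  rw [sb_key] at h
  push_cast at h htri hX hY
  nlinarith [h, htri, hX, hY, hpab,
    mul_nonneg (mul_nonneg (sub_nonneg.2 hc) (sub_nonneg.2 hb1.le)) (sub_nonneg.2 hab.le)]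

/-- `(s,p)` lies in the symmetrized bidisc iff both roots of `z² - s z + p` lie in `𝔻`. -/
theorem mem_symmetrized_bidisc_iff_roots (s p : ℂ) :
    ‖s - conj s * p‖ + ‖p‖ ^ 2 < 1 ↔
      ∃ l1 l2 : ℂ, ‖l1‖ < 1 ∧ ‖l2‖ < 1 ∧
        ∀ z : ℂ, z ^ 2 - s * z + p = (z - l1) * (z - l2) := by
  constructor
  · intro h
    obtain ⟨q, hq⟩ : ∃ q : ℂ, q ^ 2 = s ^ 2 - 4 * p :=
      IsAlgClosed.exists_pow_nat_eq _ (n := 2) (by norm_num)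
    refine ⟨(s + q) / 2, (s - q) / 2, ?_, ?_, ?_⟩
    · have hs : s = (s + q) / 2 + (s - q) / 2 := by ring
      have hp : p = (s + q) / 2 * ((s - q) / 2) := by linear_combination (1/4 : ℂ) * hq
      exact sb_root_lt _ _ (by rw [← hs, ← hp]; exact h)
    · have hs : s = (s - q) / 2 + (s + q) / 2 := by ring
      have hp : p = (s - q) / 2 * ((s + q) / 2) := by linear_combination (1/4 : ℂ) * hq
      exact sb_root_lt _ _ (by rw [← hs, ← hp]; exact h)
    · intro z; linear_combination (1/4 : ℂ) * hq
  · rintro ⟨l1, l2, h1, h2, hf⟩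
    have hp : p = l1 * l2 := by linear_combination hf 0
    have hs : s = l1 + l2 := by linear_combination hf 0 - hf 1
    rw [hs, hp, sb_key]
    set a := ‖l1‖ with ha
    set b := ‖l2‖ with hb
    have ha0 : 0 ≤ a := norm_nonneg _
    have hb0 : 0 ≤ b := norm_nonneg _
    have hab : a * b < 1 := by nlinarith
    have htri : ‖l1 * (1 - ((b : ℝ) ^ 2 : ℝ) : ℂ) + l2 * (1 - ((a : ℝ) ^ 2 : ℝ) : ℂ)‖
        ≤ a * (1 - b ^ 2) + b * (1 - a ^ 2) := by
      refine (norm_add_le _ _).trans ?_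
      rw [norm_mul, norm_mul]
      have c1 : ‖(1 - ((b : ℝ) ^ 2 : ℝ) : ℂ)‖ = 1 - b ^ 2 := by
        rw [show (1 - ((b : ℝ) ^ 2 : ℝ) : ℂ) = ((1 - b ^ 2 : ℝ) : ℂ) by push_cast; ring,
          Complex.norm_real, Real.norm_eq_abs, _root_.abs_of_nonneg (show (0:ℝ) ≤ 1 - b ^ 2 by nlinarith)]
      have c2 : ‖(1 - ((a : ℝ) ^ 2 : ℝ) : ℂ)‖ = 1 - a ^ 2 := by
        rw [show (1 - ((a : ℝ) ^ 2 : ℝ) : ℂ) = ((1 - a ^ 2 : ℝ) : ℂ) by push_cast; ring,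
          Complex.norm_real, Real.norm_eq_abs, _root_.abs_of_nonneg (show (0:ℝ) ≤ 1 - a ^ 2 by nlinarith)]
      rw [c1, c2]
    have hpab : ‖l1 * l2‖ = a * b := norm_mul _ _
    push_cast at htri ⊢
    rw [hpab]
    nlinarith [htri, mul_pos (mul_pos (sub_pos.2 h1) (sub_pos.2 h2)) (sub_pos.2 hab)]
end

section
/- The symmetrized bidisc G_2 equals the image of the Cartan domain R_I = {x ∈ ℂ^{2×2} : ‖x‖_op < 1} under the map π(x) = (tr x, det x). -/
open Complex Metric Set Matrix
open scoped Matrix.Norms.L2Operator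

/-- Any eigenvalue of a matrix has modulus bounded by the `L²` operator norm. -/
lemma eig_lt_of_lt {x : Matrix (Fin 2) (Fin 2) ℂ} (hx : ‖x‖ < 1) {lam : ℂ}
    (h : (x - lam • 1).det = 0) : ‖lam‖ < 1 := by
  obtain ⟨v, hv0, hv⟩ := (Matrix.exists_mulVec_eq_zero_iff).mpr h
  have hxv : x *ᵥ v = lam • v := by
    have := hv
    rw [Matrix.sub_mulVec, sub_eq_zero] at this
    rw [this, Matrix.smul_mulVec, Matrix.one_mulVec]
  set v' : EuclideanSpace ℂ (Fin 2) := (EuclideanSpace.equiv (Fin 2) ℂ).symm v with hv'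
  have hvnorm : 0 < ‖v'‖ := by
    rw [norm_pos_iff]
    intro hcon
    apply hv0
    have := congrArg (EuclideanSpace.equiv (Fin 2) ℂ) hcon
    simpa [hv'] using this
  have hle : ‖(EuclideanSpace.equiv (Fin 2) ℂ).symm (x *ᵥ v)‖ ≤ ‖x‖ * ‖v'‖ :=
    Matrix.l2_opNorm_mulVec x v'
  rw [hxv] at hle
  have heq : (EuclideanSpace.equiv (Fin 2) ℂ).symm (lam • v) = lam • v' := rfl
  rw [heq, norm_smul] at hle
  have hlt : ‖lam‖ * ‖v'‖ < 1 * ‖v'‖ :=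
    lt_of_le_of_lt hle (by rw [one_mul]; nlinarith)
  exact (mul_lt_mul_iff_of_pos_right hvnorm).mp hlt

/-- The `L²` operator norm of a `2 × 2` diagonal matrix is at most the max of the moduli. -/
lemma diag_norm_le (a b : ℂ) :
    ‖(Matrix.diagonal ![a, b] : Matrix (Fin 2) (Fin 2) ℂ)‖ ≤ max ‖a‖ ‖b‖ := by
  rw [Matrix.l2_opNorm_def]
  apply ContinuousLinearMap.opNorm_le_bound _ (le_max_iff.mpr (Or.inl (norm_nonneg a)))
  intro w
  rw [LinearEquiv.trans_apply]
  set c := max ‖a‖ ‖b‖ with hc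
  have hc0 : 0 ≤ c := le_max_iff.mpr (Or.inl (norm_nonneg a))
  have hw : 0 ≤ ‖w‖ := norm_nonneg w
  rw [← Real.sqrt_sq (mul_nonneg hc0 hw)]
  have h1 : ‖(Matrix.toEuclideanLin (Matrix.diagonal ![a, b])).toContinuousLinearMap w‖
      = Real.sqrt (‖a * w 0‖ ^ 2 + ‖b * w 1‖ ^ 2) := by
    rw [EuclideanSpace.norm_eq]
    congr 1
    rw [Fin.sum_univ_two]
    congr 1 <;>
    · simp [Matrix.toEuclideanLin_apply, Matrix.mulVec_diagonal]
  rw [h1]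
  apply Real.sqrt_le_sqrt
  have hwn : ‖w‖ ^ 2 = ‖w 0‖ ^ 2 + ‖w 1‖ ^ 2 := by
    rw [EuclideanSpace.norm_eq, Real.sq_sqrt (by positivity), Fin.sum_univ_two]
  have ha : ‖a‖ ≤ c := le_max_left _ _
  have hb : ‖b‖ ≤ c := le_max_right _ _
  calc ‖a * w 0‖ ^ 2 + ‖b * w 1‖ ^ 2
      = ‖a‖ ^ 2 * ‖w 0‖ ^ 2 + ‖b‖ ^ 2 * ‖w 1‖ ^ 2 := by
        rw [norm_mul, norm_mul]; ring
    _ ≤ c ^ 2 * ‖w 0‖ ^ 2 + c ^ 2 * ‖w 1‖ ^ 2 := by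
        gcongr
    _ = (c * ‖w‖) ^ 2 := by rw [mul_pow, hwn]; ring

/-- The symmetrized bidisc is the image of the Cartan domain `R_I` (operator-norm unit
ball of `2×2` matrices) under `π(x) = (tr x, det x)`. -/
theorem symmetrized_bidisc_eq_image_cartan :
    (fun x : Matrix (Fin 2) (Fin 2) ℂ => (x.trace, x.det)) ''
        {x : Matrix (Fin 2) (Fin 2) ℂ | ‖x‖ < 1} =
      (fun w : ℂ × ℂ => (w.1 + w.2, w.1 * w.2)) '' (ball (0 : ℂ) 1 ×ˢ ball (0 : ℂ) 1) := by
  ext p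
  constructor
  · rintro ⟨x, hx, rfl⟩
    obtain ⟨s, hs⟩ := IsAlgClosed.exists_pow_nat_eq (k := ℂ)
      (x.trace ^ 2 - 4 * x.det) zero_lt_two
    rw [Matrix.trace_fin_two, Matrix.det_fin_two] at hs
    have hdet : ∀ lam : ℂ,
        lam ^ 2 - (x 0 0 + x 1 1) * lam + (x 0 0 * x 1 1 - x 0 1 * x 1 0) = 0 →
        (x - lam • 1).det = 0 := by
      intro lam hlam
      rw [Matrix.det_fin_two]
      simp only [Matrix.sub_apply, Matrix.smul_apply, Matrix.one_apply_eq,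
        Matrix.one_apply_ne (by norm_num : (0 : Fin 2) ≠ 1),
        Matrix.one_apply_ne (by norm_num : (1 : Fin 2) ≠ 0), smul_eq_mul, mul_zero, mul_one,
        sub_zero]
      linear_combination hlam
    refine ⟨(((x 0 0 + x 1 1) + s) / 2, ((x 0 0 + x 1 1) - s) / 2), ⟨?_, ?_⟩, ?_⟩
    · have h := hdet (((x 0 0 + x 1 1) + s) / 2) (by field_simp; linear_combination hs)
      simpa [mem_ball, dist_eq_norm] using eig_lt_of_lt hx h
    · have h := hdet (((x 0 0 + x 1 1) - s) / 2) (by field_simp; linear_combination hs)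
      simpa [mem_ball, dist_eq_norm] using eig_lt_of_lt hx h
    · rw [Prod.mk.injEq, Matrix.trace_fin_two, Matrix.det_fin_two]
      constructor
      · ring
      · field_simp
        linear_combination -hs
  · rintro ⟨⟨a, b⟩, ⟨ha, hb⟩, rfl⟩
    refine ⟨Matrix.diagonal ![a, b], ?_, ?_⟩
    · have ha' : ‖a‖ < 1 := by simpa [mem_ball, dist_eq_norm] using ha
      have hb' : ‖b‖ < 1 := by simpa [mem_ball, dist_eq_norm] using hb
      exact lt_of_le_of_lt (diag_norm_le a b) (max_lt ha' hb')
    · simp [Matrix.trace_fin_two, Matrix.det_fin_two, Matrix.diagonal]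
end

section
/- The Shilov boundary characterization: the set {(λ₁+λ₂, λ₁λ₂) : λ₁, λ₂ ∈ 𝕋} (where 𝕋 is the unit circle) is contained in the topological boundary of G_2, and every holomorphic function on a neighborhood of the closure of G_2 attains its maximum modulus over cl(G_2) on this set. -/
open Complex Metric Set

/-- The symmetrized bidisc. -/
def symBidisc : Set (ℂ × ℂ) :=
  (fun w : ℂ × ℂ => (w.1 + w.2, w.1 * w.2)) '' (ball (0 : ℂ) 1 ×ˢ ball (0 : ℂ) 1)

/-- The distinguished (Shilov) boundary candidate: symmetrization of the torus. -/
def symTorus : Set (ℂ × ℂ) :=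
  (fun w : ℂ × ℂ => (w.1 + w.2, w.1 * w.2)) '' (sphere (0 : ℂ) 1 ×ˢ sphere (0 : ℂ) 1)

lemma closed_sub : (fun w : ℂ × ℂ => (w.1 + w.2, w.1 * w.2)) ''
    (closedBall (0 : ℂ) 1 ×ˢ closedBall (0 : ℂ) 1) ⊆ closure symBidisc := by
  have h : Continuous (fun w : ℂ × ℂ => (w.1 + w.2, w.1 * w.2)) := by fun_prop
  have := image_closure_subset_closure_image h (s := ball (0:ℂ) 1 ×ˢ ball (0:ℂ) 1)
  rwa [closure_prod_eq, closure_ball (0:ℂ) one_ne_zero] at this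

lemma closure_sub : closure symBidisc ⊆ (fun w : ℂ × ℂ => (w.1 + w.2, w.1 * w.2)) ''
    (closedBall (0 : ℂ) 1 ×ˢ closedBall (0 : ℂ) 1) := by
  apply closure_minimal
  · exact image_mono (prod_mono ball_subset_closedBall ball_subset_closedBall)
  · exact (((isCompact_closedBall _ _).prod (isCompact_closedBall _ _)).image
      (by fun_prop)).isClosed

/-- `symTorus` is contained in the topological boundary of the symmetrized bidisc, and every
function holomorphic on a neighborhood of the closure attains its maximum modulus there. -/
theorem shilov_boundary_symmetrized_bidisc :
    symTorus ⊆ frontier symBidisc ∧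
    ∀ (U : Set (ℂ × ℂ)) (f : ℂ × ℂ → ℂ), IsOpen U → closure symBidisc ⊆ U →
      DifferentiableOn ℂ f U →
      ∃ w ∈ symTorus, ∀ z ∈ closure symBidisc, ‖f z‖ ≤ ‖f w‖ := by
  constructor
  · rintro z ⟨⟨l1, l2⟩, ⟨hl1, hl2⟩, rfl⟩
    simp only [mem_sphere_iff_norm, sub_zero] at hl1 hl2
    constructor
    · apply closed_sub
      exact ⟨(l1, l2), ⟨by simp [hl1], by simp [hl2]⟩, rfl⟩
    · -- not in interior: not even in symBidisc
      intro hmem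
      have hz : (l1 + l2, l1 * l2) ∈ symBidisc := interior_subset hmem
      obtain ⟨⟨m1, m2⟩, ⟨hm1, hm2⟩, heq⟩ := hz
      simp only [mem_ball, dist_zero_right] at hm1 hm2
      have hs : m1 + m2 = l1 + l2 := congrArg Prod.fst heq
      have hp : m1 * m2 = l1 * l2 := congrArg Prod.snd heq
      have : (l1 - m1) * (l1 - m2) = 0 := by linear_combination (-l1) * hs + hp
      rcases mul_eq_zero.1 this with h | h
      · rw [sub_eq_zero] at h; rw [← h, hl1] at hm1; exact absurd hm1 (lt_irrefl 1)
      · rw [sub_eq_zero] at h; rw [← h, hl1] at hm2; exact absurd hm2 (lt_irrefl 1)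
  · intro U f hU hcl hf
    set π : ℂ × ℂ → ℂ × ℂ := fun w => (w.1 + w.2, w.1 * w.2) with hπ
    have hπc : Continuous π := by fun_prop
    -- max on compact closure
    have hcomp : IsCompact (closure symBidisc) :=
      (((isCompact_closedBall (0:ℂ) 1).prod (isCompact_closedBall (0:ℂ) 1)).image
        hπc).of_isClosed_subset isClosed_closure closure_sub
    have hne : (closure symBidisc).Nonempty :=
      ⟨(0, 0), subset_closure ⟨(0, 0), ⟨by simp, by simp⟩, by simp⟩⟩
    have hcont : ContinuousOn (fun z => ‖f z‖) (closure symBidisc) :=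
      continuous_norm.comp_continuousOn (hf.continuousOn.mono hcl)
    obtain ⟨z0, hz0, hmax⟩ := hcomp.exists_isMaxOn hne hcont
    obtain ⟨⟨a, b⟩, ⟨ha, hb⟩, hab⟩ := closure_sub hz0
    -- one-variable maximum modulus step
    have key : ∀ (c : ℂ), c ∈ closedBall (0:ℂ) 1 →
        ∀ (g : ℂ → ℂ × ℂ), (∀ u, u ∈ closedBall (0:ℂ) 1 → π (g u) ∈ closure symBidisc) →
        Differentiable ℂ g →
        ∃ c' ∈ sphere (0:ℂ) 1, ‖f (π (g c'))‖ ≥ ‖f (π (g c))‖ := by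
      intro c hc g hg hgd
      have hdc : DiffContOnCl ℂ (fun u => f (π (g u))) (ball (0:ℂ) 1) := by
        have hd : DifferentiableOn ℂ (fun u => f (π (g u))) (closedBall (0:ℂ) 1) := by
          intro u hu
          have hπd : Differentiable ℂ π :=
            (differentiable_fst.add differentiable_snd).prodMk
              (differentiable_fst.mul differentiable_snd)
          exact ((hf.differentiableAt (hU.mem_nhds (hcl (hg u hu)))).comp u
            ((hπd.comp hgd) u)).differentiableWithinAt
        exact ⟨hd.mono ball_subset_closedBall,
          hd.continuousOn.mono (by rw [closure_ball (0:ℂ) one_ne_zero])⟩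
      obtain ⟨c', hc', hmax'⟩ := Complex.exists_mem_frontier_isMaxOn_norm
        isBounded_ball ⟨0, by simp⟩ hdc
      rw [frontier_ball (0:ℂ) one_ne_zero] at hc'
      refine ⟨c', hc', ?_⟩
      have := hmax' (by rw [closure_ball (0:ℂ) one_ne_zero]; exact hc)
      simpa using this
    obtain ⟨a', ha', h1⟩ := key a ha (fun u => (u, b))
      (fun u hu => closed_sub ⟨(u, b), ⟨hu, hb⟩, rfl⟩)
      (differentiable_id.prodMk (differentiable_const b))
    obtain ⟨b', hb', h2⟩ := key b hb (fun v => (a', v))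
      (fun v hv => closed_sub ⟨(a', v), ⟨sphere_subset_closedBall ha', hv⟩, rfl⟩)
      ((differentiable_const a').prodMk differentiable_id)
    refine ⟨π (a', b'), ⟨(a', b'), ⟨ha', hb'⟩, rfl⟩, fun z hz => ?_⟩
    calc ‖f z‖ ≤ ‖f z0‖ := hmax hz
      _ = ‖f (π (a, b))‖ := by rw [show π (a, b) = z0 from hab]
      _ ≤ ‖f (π (a', b))‖ := h1
      _ ≤ ‖f (π (a', b'))‖ := h2
end

section
/- For any Möbius transformation m of the unit disc, the map G_2 ∋ (λ₁+λ₂, λ₁λ₂) ↦ (m(λ₁)+m(λ₂), m(λ₁)m(λ₂)) is well-defined and is a holomorphic automorphism of G_2. -/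
open Complex Metric Set
open scoped ComplexConjugate

/-- A Möbius transformation of the unit disc. -/
noncomputable def moebius (a ω z : ℂ) : ℂ := ω * (a - z) / (1 - conj a * z)

/-- The induced map on the symmetrized bidisc, in coordinates `(s, p)`. -/
noncomputable def symF (a ω : ℂ) : ℂ × ℂ → ℂ × ℂ := fun z =>
  ((ω * (2*a - (1 + a * conj a) * z.1 + 2 * conj a * z.2)) /
      (1 - conj a * z.1 + (conj a)^2 * z.2),
   (ω^2 * (a^2 - a * z.1 + z.2)) / (1 - conj a * z.1 + (conj a)^2 * z.2))

lemma denom_ne (a z : ℂ) (ha : ‖a‖ < 1) (hz : ‖z‖ < 1) :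
    1 - conj a * z ≠ 0 := by
  intro h
  have h1 : conj a * z = 1 := by linear_combination -h
  have : ‖conj a * z‖ = 1 := by rw [h1]; simp
  rw [norm_mul, Complex.norm_conj] at this
  nlinarith [norm_nonneg a, norm_nonneg z]

lemma abs_moebius_lt (a ω z : ℂ) (ha : ‖a‖ < 1) (hω : ‖ω‖ = 1)
    (hz : ‖z‖ < 1) : ‖moebius a ω z‖ < 1 := by
  have hd := denom_ne a z ha hz
  have key : Complex.normSq (1 - conj a * z) - Complex.normSq (a - z)
      = (1 - Complex.normSq a) * (1 - Complex.normSq z) := by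
    simp [Complex.normSq_apply, Complex.mul_re, Complex.mul_im, Complex.sub_re,
      Complex.sub_im, Complex.conj_re, Complex.conj_im]
    ring
  have ha2 : Complex.normSq a < 1 := by
    rw [← Complex.sq_norm] at *; nlinarith [norm_nonneg a]
  have hz2 : Complex.normSq z < 1 := by
    rw [← Complex.sq_norm] at *; nlinarith [norm_nonneg z]
  have hlt : Complex.normSq (a - z) < Complex.normSq (1 - conj a * z) := by nlinarith
  have habs : ‖a - z‖ < ‖1 - conj a * z‖ := by
    have := Complex.sq_norm (a - z)
    have := Complex.sq_norm (1 - conj a * z)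
    nlinarith [norm_nonneg (a - z), norm_nonneg (1 - conj a * z)]
  have hdpos : 0 < ‖1 - conj a * z‖ := by
    exact norm_pos_iff.mpr hd
  rw [moebius, norm_div, norm_mul, hω, one_mul, div_lt_one hdpos]
  exact habs

lemma symF_eq (a ω l1 l2 : ℂ) (ha : ‖a‖ < 1)
    (h1 : ‖l1‖ < 1) (h2 : ‖l2‖ < 1) :
    symF a ω (l1 + l2, l1 * l2) =
      (moebius a ω l1 + moebius a ω l2, moebius a ω l1 * moebius a ω l2) := by
  have d1 := denom_ne a l1 ha h1
  have d2 := denom_ne a l2 ha h2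
  have hd : 1 - conj a * (l1 + l2) + (conj a)^2 * (l1 * l2)
      = (1 - conj a * l1) * (1 - conj a * l2) := by ring
  have hd0 : 1 - conj a * (l1 + l2) + (conj a)^2 * (l1 * l2) ≠ 0 := by
    rw [hd]; exact mul_ne_zero d1 d2
  simp only [symF, moebius, Prod.mk.injEq, hd]
  constructor <;> (field_simp; ring)

lemma mem_symBidisc_iff (z : ℂ × ℂ) :
    z ∈ symBidisc ↔ ∃ l1 l2 : ℂ, ‖l1‖ < 1 ∧ ‖l2‖ < 1 ∧
      z = (l1 + l2, l1 * l2) := by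
  constructor
  · rintro ⟨⟨l1, l2⟩, ⟨h1, h2⟩, rfl⟩
    exact ⟨l1, l2, by simpa using mem_ball_zero_iff.mp h1,
      by simpa using mem_ball_zero_iff.mp h2, rfl⟩
  · rintro ⟨l1, l2, h1, h2, rfl⟩
    exact ⟨(l1, l2), ⟨mem_ball_zero_iff.mpr (by simpa),
      mem_ball_zero_iff.mpr (by simpa)⟩, rfl⟩

lemma symF_mapsTo (a ω : ℂ) (ha : ‖a‖ < 1) (hω : ‖ω‖ = 1) :
    Set.MapsTo (symF a ω) symBidisc symBidisc := by
  intro z hz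
  obtain ⟨l1, l2, h1, h2, rfl⟩ := (mem_symBidisc_iff z).mp hz
  rw [symF_eq a ω l1 l2 ha h1 h2, mem_symBidisc_iff]
  exact ⟨moebius a ω l1, moebius a ω l2, abs_moebius_lt a ω l1 ha hω h1,
    abs_moebius_lt a ω l2 ha hω h2, rfl⟩

lemma moebius_inv (a ω z : ℂ) (ha : ‖a‖ < 1) (hω : ‖ω‖ = 1)
    (hz : ‖z‖ < 1) :
    moebius (ω * a) (conj ω) (moebius a ω z) = z := by
  have hωω : ω * conj ω = 1 := by
    have := Complex.mul_conj ω
    rw [this, Complex.normSq_eq_norm_sq, hω]; norm_num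
  have d1 := denom_ne a z ha hz
  have hma : ‖ω * a‖ < 1 := by rw [norm_mul, hω, one_mul]; exact ha
  have d2 := denom_ne (ω * a) (moebius a ω z) hma (abs_moebius_lt a ω z ha hω hz)
  simp only [moebius] at d2 ⊢
  rw [map_mul] at d2 ⊢
  field_simp at d2 ⊢
  rw [div_eq_iff (div_ne_zero_iff.mp d2).1]
  linear_combination (z - conj a * z^2) * hωω

lemma symF_left_inv (a ω : ℂ) (ha : ‖a‖ < 1) (hω : ‖ω‖ = 1) :
    ∀ z ∈ symBidisc, symF (ω * a) (conj ω) (symF a ω z) = z := by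
  intro z hz
  obtain ⟨l1, l2, h1, h2, rfl⟩ := (mem_symBidisc_iff z).mp hz
  have hma : ‖ω * a‖ < 1 := by rw [norm_mul, hω, one_mul]; exact ha
  rw [symF_eq a ω l1 l2 ha h1 h2,
    symF_eq (ω * a) (conj ω) _ _ hma (abs_moebius_lt a ω l1 ha hω h1)
      (abs_moebius_lt a ω l2 ha hω h2),
    moebius_inv a ω l1 ha hω h1, moebius_inv a ω l2 ha hω h2]

lemma symF_diff (a ω : ℂ) (ha : ‖a‖ < 1) :
    DifferentiableOn ℂ (symF a ω) symBidisc := by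
  have hden : ∀ z ∈ symBidisc, 1 - conj a * z.1 + (conj a)^2 * z.2 ≠ 0 := by
    intro z hz
    obtain ⟨l1, l2, h1, h2, rfl⟩ := (mem_symBidisc_iff z).mp hz
    have hd : 1 - conj a * (l1 + l2) + (conj a)^2 * (l1 * l2)
        = (1 - conj a * l1) * (1 - conj a * l2) := by ring
    simpa [hd] using mul_ne_zero (denom_ne a l1 ha h1) (denom_ne a l2 ha h2)
  have hd : Differentiable ℂ (fun z : ℂ × ℂ => 1 - conj a * z.1 + (conj a)^2 * z.2) := by
    fun_prop
  have hinv := DifferentiableOn.inv hd.differentiableOn hden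
  have hnum1 : Differentiable ℂ
      (fun z : ℂ × ℂ => ω * (2*a - (1 + a * conj a) * z.1 + 2 * conj a * z.2)) := by fun_prop
  have hnum2 : Differentiable ℂ (fun z : ℂ × ℂ => ω^2 * (a^2 - a * z.1 + z.2)) := by fun_prop
  unfold symF
  simp only [div_eq_mul_inv]
  exact DifferentiableOn.prodMk (hnum1.differentiableOn.mul hinv)
    (hnum2.differentiableOn.mul hinv)

/-- Any Möbius transformation `m` of `𝔻` induces a well-defined holomorphic automorphism
`(λ₁+λ₂, λ₁λ₂) ↦ (m λ₁ + m λ₂, m λ₁ · m λ₂)` of the symmetrized bidisc. -/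
theorem moebius_induces_automorphism (a ω : ℂ) (ha : ‖a‖ < 1)
    (hω : ‖ω‖ = 1) :
    ∃ F : ℂ × ℂ → ℂ × ℂ,
      (∀ l1 l2 : ℂ, ‖l1‖ < 1 → ‖l2‖ < 1 →
        F (l1 + l2, l1 * l2) =
          (moebius a ω l1 + moebius a ω l2, moebius a ω l1 * moebius a ω l2)) ∧
      Set.BijOn F symBidisc symBidisc ∧
      DifferentiableOn ℂ F symBidisc ∧
      ∃ Finv : ℂ × ℂ → ℂ × ℂ, DifferentiableOn ℂ Finv symBidisc ∧
        (∀ z ∈ symBidisc, Finv (F z) = z) ∧ (∀ z ∈ symBidisc, F (Finv z) = z) := by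
  have hωω : ω * conj ω = 1 := by
    have := Complex.mul_conj ω
    rw [this, Complex.normSq_eq_norm_sq, hω]; norm_num
  have hma : ‖ω * a‖ < 1 := by rw [norm_mul, hω, one_mul]; exact ha
  have hcω : ‖conj ω‖ = 1 := by rw [Complex.norm_conj]; exact hω
  refine ⟨symF a ω, fun l1 l2 h1 h2 => symF_eq a ω l1 l2 ha h1 h2, ?_, symF_diff a ω ha,
    symF (ω * a) (conj ω), symF_diff (ω * a) (conj ω) hma, symF_left_inv a ω ha hω, ?_⟩
  · have hinv2 : ∀ z ∈ symBidisc, symF a ω (symF (ω * a) (conj ω) z) = z := by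
      intro z hz
      have := symF_left_inv (ω * a) (conj ω) hma hcω z hz
      rwa [show conj ω * (ω * a) = a by rw [← mul_assoc, mul_comm (conj ω) ω, hωω, one_mul],
        Complex.conj_conj] at this
    exact Set.InvOn.bijOn ⟨symF_left_inv a ω ha hω, hinv2⟩ (symF_mapsTo a ω ha hω)
      (symF_mapsTo (ω * a) (conj ω) hma hcω)
  · intro z hz
    have := symF_left_inv (ω * a) (conj ω) hma hcω z hz
    rwa [show conj ω * (ω * a) = a by rw [← mul_assoc, mul_comm (conj ω) ω, hωω, one_mul],
      Complex.conj_conj] at this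
end

section
/- For b ∈ R_I, the map Φ_b(x) = (1-bb*)^{-1/2}(b-x)(1-b*x)^{-1}(1-b*b)^{1/2} maps R_I into R_I. -/
open Complex Metric Set Matrix
open scoped Matrix.Norms.L2Operator ComplexOrder


variable {n : Type*} [Fintype n] [DecidableEq n]

local notation "⟪" x ", " y "⟫" => @inner ℂ _ _ x y

lemma aux_posDef_conj {A : Matrix n n ℂ} (hA : A.PosDef) {C : Matrix n n ℂ} (hC : IsUnit C) :
    (Cᴴ * A * C).PosDef := by
  refine Matrix.posDef_iff_dotProduct_mulVec.mpr ⟨Matrix.isHermitian_conjTranspose_mul_mul C hA.1, fun v hv => ?_⟩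
  have hCv : C *ᵥ v ≠ 0 := by
    have hinj := Matrix.mulVec_injective_iff_isUnit.mpr hC
    intro h
    exact hv (hinj (h.trans (Matrix.mulVec_zero C).symm))
  have := (Matrix.posDef_iff_dotProduct_mulVec.mp hA).2 hCv
  simpa only [star_mulVec, ← Matrix.mulVec_mulVec, Matrix.dotProduct_mulVec, Matrix.mul_assoc]
    using this

lemma aux_posDef_one_sub (x : Matrix n n ℂ) (hx : ‖x‖ < 1) :
    ((1 : Matrix n n ℂ) - xᴴ * x).PosDef := by
  rw [Matrix.posDef_iff_dotProduct_mulVec]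
  constructor
  · simp [Matrix.IsHermitian, Matrix.conjTranspose_sub, Matrix.conjTranspose_mul]
  · intro v hv
    have key : star v ⬝ᵥ ((1 - xᴴ * x) *ᵥ v)
        = ⟪(WithLp.equiv 2 _).symm v, (WithLp.equiv 2 _).symm v⟫
          - ⟪(WithLp.equiv 2 _).symm (x *ᵥ v), (WithLp.equiv 2 _).symm (x *ᵥ v)⟫ := by
      rw [EuclideanSpace.inner_toLp_toLp,
        EuclideanSpace.inner_toLp_toLp]
      rw [Matrix.sub_mulVec, dotProduct_sub, Matrix.one_mulVec]
      congr 1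
      · exact dotProduct_comm _ _
      rw [← Matrix.mulVec_mulVec, Matrix.dotProduct_mulVec, ← Matrix.star_mulVec]
      exact dotProduct_comm _ _
    rw [key, inner_self_eq_norm_sq_to_K, inner_self_eq_norm_sq_to_K]
    have hvn : (0:ℝ) < ‖(WithLp.equiv 2 _).symm v‖ := by
      simpa [norm_pos_iff] using hv
    have hxv : ‖(WithLp.equiv 2 _).symm (x *ᵥ v)‖ < ‖(WithLp.equiv 2 _).symm v‖ := by
      calc ‖(WithLp.equiv 2 _).symm (x *ᵥ v)‖ ≤ ‖x‖ * ‖(WithLp.equiv 2 _).symm v‖ :=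
            Matrix.l2_opNorm_mulVec x _
        _ < 1 * ‖(WithLp.equiv 2 _).symm v‖ := by
            exact mul_lt_mul_of_pos_right hx hvn
        _ = ‖(WithLp.equiv 2 _).symm v‖ := one_mul _
    have : (0:ℝ) < ‖(WithLp.equiv 2 _).symm v‖ ^ 2 - ‖(WithLp.equiv 2 _).symm (x *ᵥ v)‖ ^ 2 := by
      have := pow_lt_pow_left₀ hxv (norm_nonneg _) (by norm_num : 2 ≠ 0)
      linarith
    exact lt_of_lt_of_eq (Complex.zero_lt_real.mpr this) (by push_cast; rfl)

lemma aux_norm_lt_one [Nonempty n] (M : Matrix n n ℂ)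
    (h : ((1 : Matrix n n ℂ) - Mᴴ * M).PosDef) : ‖M‖ < 1 := by
  set L := Matrix.toEuclideanCLM (n := n) (𝕜 := ℂ) M with hLdef
  have hpos : ∀ v : EuclideanSpace ℂ n, v ≠ 0 → ‖L v‖ < ‖v‖ := by
    intro v hv
    have hv' : (WithLp.equiv 2 (n → ℂ)) v ≠ 0 := by
      intro h0
      exact hv ((WithLp.equiv 2 (n → ℂ)).injective (by simpa using h0))
    have h2 := (Matrix.posDef_iff_dotProduct_mulVec.mp h).2 hv'
    have key : star ((WithLp.equiv 2 (n → ℂ)) v) ⬝ᵥ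
          ((1 - Mᴴ * M) *ᵥ ((WithLp.equiv 2 (n → ℂ)) v))
        = ⟪v, Matrix.toEuclideanCLM (n := n) (𝕜 := ℂ) (1 - Mᴴ * M) v⟫ := by
      rw [EuclideanSpace.inner_eq_star_dotProduct, Matrix.ofLp_toEuclideanCLM]
      exact dotProduct_comm _ _
    have expand : Matrix.toEuclideanCLM (n := n) (𝕜 := ℂ) (1 - Mᴴ * M)
        = 1 - ContinuousLinearMap.adjoint L * L := by
      rw [map_sub, _root_.map_one, _root_.map_mul, ← Matrix.star_eq_conjTranspose, map_star,
        ContinuousLinearMap.star_eq_adjoint]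
    have inner_eq : ⟪v, Matrix.toEuclideanCLM (n := n) (𝕜 := ℂ) (1 - Mᴴ * M) v⟫
        = ((‖v‖ ^ 2 - ‖L v‖ ^ 2 : ℝ) : ℂ) := by
      rw [expand]
      have : (1 - ContinuousLinearMap.adjoint L * L) v
          = v - ContinuousLinearMap.adjoint L (L v) := rfl
      rw [this, inner_sub_right, ContinuousLinearMap.adjoint_inner_right,
        inner_self_eq_norm_sq_to_K, inner_self_eq_norm_sq_to_K]
      push_cast
      rfl
    rw [key, inner_eq] at h2
    have hreal : (0:ℝ) < ‖v‖ ^ 2 - ‖L v‖ ^ 2 := Complex.zero_lt_real.mp h2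
    nlinarith [norm_nonneg (L v), norm_nonneg v]
  obtain ⟨v₀, hv₀s, hmax⟩ := (isCompact_sphere (0 : EuclideanSpace ℂ n) 1).exists_isMaxOn
    (NormedSpace.sphere_nonempty.mpr zero_le_one) (L.continuous.norm.continuousOn)
  have hv₀1 : ‖v₀‖ = 1 := by simpa using hv₀s
  have hv₀ne : v₀ ≠ 0 := by
    intro h0; rw [h0] at hv₀1; simp at hv₀1
  have hc : ‖L v₀‖ < 1 := by
    have := hpos v₀ hv₀ne; rwa [hv₀1] at this
  have hML : ‖M‖ = ‖L‖ := rfl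
  rw [hML]
  refine lt_of_le_of_lt (ContinuousLinearMap.opNorm_le_bound L (norm_nonneg _) ?_) hc
  intro v
  rcases eq_or_ne v 0 with rfl | hv
  · simp
  · have hvn : (0:ℝ) < ‖v‖ := norm_pos_iff.mpr hv
    have hw : ((‖v‖⁻¹ : ℝ) : ℂ) • v ∈ sphere (0 : EuclideanSpace ℂ n) 1 := by
      rw [mem_sphere_zero_iff_norm, norm_smul]
      simp [abs_of_pos hvn, inv_mul_cancel₀ hvn.ne']
    have hble : ‖L ((((‖v‖⁻¹ : ℝ)) : ℂ) • v)‖ ≤ ‖L v₀‖ := hmax hw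
    rw [_root_.map_smul, norm_smul] at hble
    have : ‖(((‖v‖⁻¹ : ℝ)) : ℂ)‖ * ‖L v‖ ≤ ‖L v₀‖ := hble
    rw [Complex.norm_real, Real.norm_eq_abs, abs_of_pos (by positivity)] at this
    calc ‖L v‖ = ‖v‖ * (‖v‖⁻¹ * ‖L v‖) := by field_simp
      _ ≤ ‖v‖ * ‖L v₀‖ := by
          exact mul_le_mul_of_nonneg_left this hvn.le
      _ = ‖L v₀‖ * ‖v‖ := mul_comm _ _


/-- For `b` in the operator-norm unit ball `R_I` of `ℂ^{2×2}`, the map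
`Φ_b(x) = (1-bb*)^{-1/2}(b-x)(1-b*x)^{-1}(1-b*b)^{1/2}` maps `R_I` into `R_I`.
Here `S` and `T` are the positive square roots of `1-bb*` and `1-b*b`. -/
theorem cartan_moebius_self_map (b : Matrix (Fin 2) (Fin 2) ℂ) (hb : ‖b‖ < 1)
    (S T : Matrix (Fin 2) (Fin 2) ℂ) (hS : S.PosDef) (hT : T.PosDef)
    (hS2 : S * S = 1 - b * bᴴ) (hT2 : T * T = 1 - bᴴ * b) :
    ∀ x : Matrix (Fin 2) (Fin 2) ℂ, ‖x‖ < 1 →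
      ‖S⁻¹ * (b - x) * (1 - bᴴ * x)⁻¹ * T‖ < 1 := by
  intro x hx
  have hSH : Sᴴ = S := hS.isHermitian
  have hTH : Tᴴ = T := hT.isHermitian
  have hSd : IsUnit S.det := (Matrix.isUnit_iff_isUnit_det S).mp hS.isUnit
  have hTd : IsUnit T.det := (Matrix.isUnit_iff_isUnit_det T).mp hT.isUnit
  have hu : IsUnit (1 - bᴴ * x) := by
    have hlt : ‖bᴴ * x‖ < 1 := by
      calc ‖bᴴ * x‖ ≤ ‖bᴴ‖ * ‖x‖ := Matrix.l2_opNorm_mul _ _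
        _ = ‖b‖ * ‖x‖ := by rw [Matrix.l2_opNorm_conjTranspose]
        _ < 1 := by nlinarith [norm_nonneg b, norm_nonneg x]
    exact (Units.oneSub _ hlt).isUnit
  have hud : IsUnit (1 - bᴴ * x).det := (Matrix.isUnit_iff_isUnit_det _).mp hu
  have huH : (1 - bᴴ * x)ᴴ = 1 - xᴴ * b := by
    simp [Matrix.conjTranspose_sub, Matrix.conjTranspose_mul]
  have hu'd : IsUnit (1 - xᴴ * b).det := by
    rw [← huH, Matrix.det_conjTranspose]; exact hud.star
  have hBd : IsUnit ((1 : Matrix (Fin 2) (Fin 2) ℂ) - b * bᴴ).det := by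
    rw [← hS2, Matrix.det_mul]; exact hSd.mul hSd
  have hSinv : S⁻¹ * S⁻¹ = ((1 : Matrix (Fin 2) (Fin 2) ℂ) - b * bᴴ)⁻¹ := by
    rw [← Matrix.mul_inv_rev, hS2]
  have hTinv : T⁻¹ * T⁻¹ = ((1 : Matrix (Fin 2) (Fin 2) ℂ) - bᴴ * b)⁻¹ := by
    rw [← Matrix.mul_inv_rev, hT2]
  have hBmul : ((1 : Matrix (Fin 2) (Fin 2) ℂ) - b * bᴴ) * (1 - b * bᴴ)⁻¹ = 1 :=
    Matrix.mul_nonsing_inv _ hBd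
  have hBmul' : ((1 : Matrix (Fin 2) (Fin 2) ℂ) - b * bᴴ)⁻¹ * (1 - b * bᴴ) = 1 :=
    Matrix.nonsing_inv_mul _ hBd
  have hc1 : b * bᴴ * ((1 : Matrix (Fin 2) (Fin 2) ℂ) - b * bᴴ)⁻¹ = (1 - b * bᴴ)⁻¹ - 1 := by
    have h0 : ((1 : Matrix (Fin 2) (Fin 2) ℂ) - (1 - b * bᴴ)) * (1 - b * bᴴ)⁻¹
        = (1 - b * bᴴ)⁻¹ - 1 := by
      rw [sub_mul, one_mul, hBmul]
    simpa [sub_sub_cancel] using h0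
  have hc2 : ((1 : Matrix (Fin 2) (Fin 2) ℂ) - b * bᴴ)⁻¹ * (b * bᴴ) = (1 - b * bᴴ)⁻¹ - 1 := by
    have h0 : ((1 : Matrix (Fin 2) (Fin 2) ℂ) - b * bᴴ)⁻¹ * (1 - (1 - b * bᴴ))
        = (1 - b * bᴴ)⁻¹ - 1 := by
      rw [mul_sub, mul_one, hBmul']
    simpa [sub_sub_cancel] using h0
  have invA_eq : ((1 : Matrix (Fin 2) (Fin 2) ℂ) - bᴴ * b)⁻¹
      = 1 + bᴴ * (1 - b * bᴴ)⁻¹ * b := by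
    apply Matrix.inv_eq_right_inv
    have expand : ((1 : Matrix (Fin 2) (Fin 2) ℂ) - bᴴ * b) * (1 + bᴴ * (1 - b * bᴴ)⁻¹ * b)
        = 1 + bᴴ * (1 - b * bᴴ)⁻¹ * b - bᴴ * b
          - bᴴ * (b * bᴴ * (1 - b * bᴴ)⁻¹) * b := by
      noncomm_ring
    rw [expand, hc1]; noncomm_ring
  have s1 : ((1 : Matrix (Fin 2) (Fin 2) ℂ) - xᴴ * b) * (1 + bᴴ * (1 - b * bᴴ)⁻¹ * b)
      = 1 + bᴴ * (1 - b * bᴴ)⁻¹ * b - xᴴ * (1 - b * bᴴ)⁻¹ * b := by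
    have expand : ((1 : Matrix (Fin 2) (Fin 2) ℂ) - xᴴ * b) * (1 + bᴴ * (1 - b * bᴴ)⁻¹ * b)
        = 1 + bᴴ * (1 - b * bᴴ)⁻¹ * b - xᴴ * b
          - xᴴ * (b * bᴴ * (1 - b * bᴴ)⁻¹) * b := by
      noncomm_ring
    rw [expand, hc1]; noncomm_ring
  have key : ((1 : Matrix (Fin 2) (Fin 2) ℂ) - xᴴ * b) * (1 - bᴴ * b)⁻¹ * (1 - bᴴ * x)
      - (bᴴ - xᴴ) * (1 - b * bᴴ)⁻¹ * (b - x) = 1 - xᴴ * x := by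
    rw [invA_eq, s1]
    have expand2 : ((1 : Matrix (Fin 2) (Fin 2) ℂ) + bᴴ * (1 - b * bᴴ)⁻¹ * b
          - xᴴ * (1 - b * bᴴ)⁻¹ * b) * (1 - bᴴ * x)
        - (bᴴ - xᴴ) * (1 - b * bᴴ)⁻¹ * (b - x)
        = 1 - bᴴ * x - bᴴ * ((1 - b * bᴴ)⁻¹ * (b * bᴴ)) * x
          + xᴴ * ((1 - b * bᴴ)⁻¹ * (b * bᴴ)) * x
          + bᴴ * (1 - b * bᴴ)⁻¹ * x - xᴴ * (1 - b * bᴴ)⁻¹ * x := by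
      noncomm_ring
    rw [expand2, hc2]; noncomm_ring
  -- conjTranspose of M
  have hMH : (S⁻¹ * (b - x) * (1 - bᴴ * x)⁻¹ * T)ᴴ
      = T * ((1 - xᴴ * b)⁻¹ * ((bᴴ - xᴴ) * S⁻¹)) := by
    simp only [Matrix.conjTranspose_mul, Matrix.conjTranspose_nonsing_inv,
      Matrix.conjTranspose_sub, Matrix.conjTranspose_one, Matrix.conjTranspose_conjTranspose,
      hSH, hTH, Matrix.mul_assoc]
  have hMHM : (S⁻¹ * (b - x) * (1 - bᴴ * x)⁻¹ * T)ᴴ * (S⁻¹ * (b - x) * (1 - bᴴ * x)⁻¹ * T)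
      = T * ((1 - xᴴ * b)⁻¹ * ((bᴴ - xᴴ) * ((1 - b * bᴴ)⁻¹
          * ((b - x) * ((1 - bᴴ * x)⁻¹ * T))))) := by
    rw [hMH]
    simp only [Matrix.mul_assoc]
    rw [← Matrix.mul_assoc S⁻¹ S⁻¹, hSinv]
  have hTAT : T * (((1 : Matrix (Fin 2) (Fin 2) ℂ) - bᴴ * b)⁻¹ * T) = 1 := by
    rw [← hTinv, Matrix.mul_assoc, Matrix.nonsing_inv_mul _ hTd, mul_one,
      Matrix.mul_nonsing_inv _ hTd]
  have rhs_eq : ((1 - bᴴ * x)⁻¹ * T)ᴴ * (1 - xᴴ * x) * ((1 - bᴴ * x)⁻¹ * T)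
      = 1 - (S⁻¹ * (b - x) * (1 - bᴴ * x)⁻¹ * T)ᴴ * (S⁻¹ * (b - x) * (1 - bᴴ * x)⁻¹ * T) := by
    rw [Matrix.conjTranspose_mul, Matrix.conjTranspose_nonsing_inv, huH, hTH, ← key,
      mul_sub, sub_mul]
    congr 1
    · simp only [Matrix.mul_assoc]
      rw [Matrix.nonsing_inv_mul_cancel_left _ _ hu'd,
        Matrix.mul_nonsing_inv_cancel_left _ _ hud]
      exact hTAT
    · rw [hMHM]
      simp only [Matrix.mul_assoc]
  -- conclude
  apply aux_norm_lt_one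
  rw [← rhs_eq]
  exact aux_posDef_conj (aux_posDef_one_sub x hx)
    ((Matrix.isUnit_nonsing_inv_iff.mpr hu).mul hT.isUnit)
end

section
/- Let c ∈ 𝔻 and Φ the automorphism of R_I associated to the matrix b = [[0,0],[c,0]], given explicitly by Φ(x)₁₁ = √(1-|c|²)·(-x₁₁)/(1-conj(c)x₂₁), Φ(x)₁₂ = (-x₁₂ - conj(c)det x)/(1-conj(c)x₂₁), Φ(x)₂₁ = (-x₂₁+c)/(1-conj(c)x₂₁), Φ(x)₂₂ = √(1-|c|²)·(-x₂₂)/(1-conj(c)x₂₁). Then for every λ ∈ 𝔻 and x ∈ R_I, Φ of the matrix [[λx₁₁, λ²x₁₂],[x₂₁, λx₂₂]] equals [[λΦ(x)₁₁, λ²Φ(x)₁₂],[Φ(x)₂₁, λΦ(x)₂₂]]. -/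
open Complex Metric Set Matrix
open scoped ComplexConjugate Matrix.Norms.L2Operator

/-- The automorphism `Φ` of `R_I` associated to `b = [[0,0],[c,0]]`, written entrywise. -/
noncomputable def PhiLower (c : ℂ) (x : Matrix (Fin 2) (Fin 2) ℂ) :
    Matrix (Fin 2) (Fin 2) ℂ :=
  Matrix.of
    ![![(Real.sqrt (1 - ‖c‖ ^ 2) : ℂ) * (-(x 0 0)) / (1 - conj c * x 1 0),
        (-(x 0 1) - conj c * x.det) / (1 - conj c * x 1 0)],
      ![(-(x 1 0) + c) / (1 - conj c * x 1 0),
        (Real.sqrt (1 - ‖c‖ ^ 2) : ℂ) * (-(x 1 1)) / (1 - conj c * x 1 0)]]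

/-- The entrywise weighting `[[λx₁₁, λ²x₁₂],[x₂₁, λx₂₂]]`. -/
def wt (l : ℂ) (x : Matrix (Fin 2) (Fin 2) ℂ) : Matrix (Fin 2) (Fin 2) ℂ :=
  Matrix.of ![![l * x 0 0, l ^ 2 * x 0 1], ![x 1 0, l * x 1 1]]

/-- `Φ` is equivariant with respect to the weighting `(λ, λ², 1, λ)` of the entries. -/
theorem phiLower_equivariant (c : ℂ) (hc : ‖c‖ < 1) (l : ℂ)
    (hl : ‖l‖ < 1) (x : Matrix (Fin 2) (Fin 2) ℂ) (hx : ‖x‖ < 1) :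
    PhiLower c (wt l x) = wt l (PhiLower c x) := by
  ext i j
  fin_cases i <;> fin_cases j <;>
    simp [PhiLower, wt, Matrix.det_fin_two, div_eq_mul_inv] <;> ring
end
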